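/- Let Ŝ ⊆ ℤ^k × ℤ be a finite set and let m be a positive integer such that every fiber of Ŝ has no gaps larger than m; that is, for every y ∈ ℤ^k and all t₁, t₂ with (y, t₁) ∈ Ŝ, (y, t₂) ∈ Ŝ and t₂ − t₁ > m, there exists t with t₁ < t < t₂ and (y, t) ∈ Ŝ. Define Z = Ŝ ∖ ⋃_{l=1}^m (Ŝ + l), where Ŝ + l = {(y, t + l) : (y, t) ∈ Ŝ}. Then the projection pr(y, t) = y restricted to Z is injective, and pr(Z) = pr(Ŝ); equivalently, for every y in pr(Ŝ) there is exactly one t ∈ ℤ with (y, t) ∈ Z, namely the minimum of the fiber {t : (y, t) ∈ Ŝ}. -/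

import Mathlib

theorem stmt_12 (k : ℕ) (S : Set ((Fin k → ℤ) × ℤ)) (hSfin : S.Finite)
    (m : ℤ) (hm : 0 < m)
    (hgaps : ∀ (y : Fin k → ℤ) (t₁ t₂ : ℤ), (y, t₁) ∈ S → (y, t₂) ∈ S →
      t₂ - t₁ > m → ∃ t : ℤ, t₁ < t ∧ t < t₂ ∧ (y, t) ∈ S)
    (Z : Set ((Fin k → ℤ) × ℤ))
    (hZ : Z = S \ ⋃ l ∈ Finset.Icc (1 : ℤ) m, (fun p : (Fin k → ℤ) × ℤ => (p.1, p.2 + l)) '' S) :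
    Set.InjOn Prod.fst Z ∧ Prod.fst '' Z = Prod.fst '' S ∧
      ∀ y ∈ Prod.fst '' S, ∀ t : ℤ, ((y, t) ∈ Z ↔ IsLeast {t' : ℤ | (y, t') ∈ S} t) := by
  have hfib : ∀ y : Fin k → ℤ, ({t' : ℤ | (y, t') ∈ S}).Finite := by
    intro y
    exact Set.Finite.preimage (f := fun t' => (y, t'))
      (fun a _ b _ h => by simpa using congrArg Prod.snd h) hSfin
  have key : ∀ (y : Fin k → ℤ) (t : ℤ),
      (y, t) ∈ Z ↔ IsLeast {t' : ℤ | (y, t') ∈ S} t := by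
    intro y t
    constructor
    · intro hz
      rw [hZ] at hz
      obtain ⟨hS, hnot⟩ := hz
      refine ⟨hS, ?_⟩
      by_contra hcon
      simp only [lowerBounds, Set.mem_setOf_eq] at hcon
      push_neg at hcon
      obtain ⟨s, hsS, hst⟩ := hcon
      have hfin : ({t' : ℤ | (y, t') ∈ S} ∩ Set.Iio t).Finite :=
        (hfib y).inter_of_left _
      have hne : (hfin.toFinset).Nonempty := by
        rw [Set.Finite.toFinset_nonempty]
        exact ⟨s, hsS, hst⟩
      set s₀ := hfin.toFinset.max' hne with hs₀def
      have hs₀mem : (y, s₀) ∈ S ∧ s₀ < t := by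
        have := hfin.toFinset.max'_mem hne
        rw [Set.Finite.mem_toFinset] at this
        exact this
      have hs₀max : ∀ x, (y, x) ∈ S → x < t → x ≤ s₀ := by
        intro x hx hxt
        apply hfin.toFinset.le_max'
        rw [Set.Finite.mem_toFinset]
        exact ⟨hx, hxt⟩
      have hle : t - s₀ ≤ m := by
        by_contra hgt
        push_neg at hgt
        obtain ⟨t', ht1, ht2, ht3⟩ := hgaps y s₀ t hs₀mem.1 hS hgt
        exact absurd (hs₀max t' ht3 ht2) (not_le.mpr ht1)
      apply hnot
      rw [Set.mem_iUnion₂]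
      refine ⟨t - s₀, ?_, ?_⟩
      · rw [Finset.mem_Icc]
        exact ⟨by omega, hle⟩
      · exact ⟨(y, s₀), hs₀mem.1, by simp⟩
    · rintro ⟨hS, hlb⟩
      rw [hZ]
      refine ⟨hS, ?_⟩
      intro hmem
      rw [Set.mem_iUnion₂] at hmem
      obtain ⟨l, hl, ⟨p, hpS, hpe⟩⟩ := hmem
      rw [Finset.mem_Icc] at hl
      obtain ⟨hy, ht⟩ := Prod.mk.injEq .. ▸ hpe
      have : (y, t - l) ∈ S := by
        have : p = (y, t - l) := by
          rw [Prod.ext_iff]; constructor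
          · exact hy
          · omega
        rwa [this] at hpS
      have := hlb this
      omega
  refine ⟨?_, ?_, fun y _ t => key y t⟩
  · rintro ⟨y1, t1⟩ h1 ⟨y2, t2⟩ h2 heq
    simp only at heq
    subst heq
    have := ((key y1 t1).mp h1).unique ((key y1 t2).mp h2)
    simp [this]
  · apply Set.Subset.antisymm
    · exact Set.image_mono (by rw [hZ]; exact Set.diff_subset)
    · rintro y ⟨⟨y', t⟩, hS, rfl⟩
      have hne : ({t' : ℤ | (y', t') ∈ S}).Nonempty := ⟨t, hS⟩
      obtain ⟨t₀, ht₀⟩ := Set.Finite.exists_minimalFor id _ (hfib y') hne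
      have hleast : IsLeast {t' : ℤ | (y', t') ∈ S} t₀ := by
        refine ⟨ht₀.1, fun x hx => ?_⟩
        by_contra h
        push_neg at h
        exact absurd (ht₀.2 hx (le_of_lt h)) (by simp; omega)
      exact ⟨(y', t₀), (key y' t₀).mpr hleast, rfl⟩
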